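/- Let R be a local ring with maximal ideal 𝔪 and residue field F = R/𝔪, let S be a finitely generated graded R-algebra, let f_1,…,f_n ∈ S be homogeneous elements, and set A = R[f_1,…,f_n] ⊆ S. Set S_F = S ⊗_R F and let A_F = A ⊗_R F be the F-subalgebra of S_F generated by the classes of f_1,…,f_n. If S_F is finitely generated as an A_F-module, then S is finitely generated as an A-module. -/

import Mathlib

open TensorProduct
open scoped Classical

set_option synthInstance.maxHeartbeats 1000000
set_option maxHeartbeats 1000000

section Aux

variable {R S : Type*} [CommRing R] [CommRing S] [Algebra R S]
  (𝒜 : ℕ → Submodule R S) [GradedAlgebra 𝒜]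

/-- Degree-`d` projection as an `R`-linear map. -/
noncomputable def prjAux (d : ℕ) : S →ₗ[R] S :=
  ((𝒜 d).subtype.comp (DirectSum.component R ℕ (fun i => 𝒜 i) d)).comp
    (DirectSum.decomposeLinearEquiv 𝒜).toLinearMap

lemma prjAux_apply (d : ℕ) (x : S) :
    prjAux 𝒜 d x = (DirectSum.decompose 𝒜 x d : S) := rfl

lemma prjAux_mem (d : ℕ) (x : S) : prjAux 𝒜 d x ∈ 𝒜 d := SetLike.coe_mem _

lemma prjAux_of_mem_same {d : ℕ} {x : S} (h : x ∈ 𝒜 d) : prjAux 𝒜 d x = x := by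
  rw [prjAux_apply, DirectSum.decompose_of_mem_same 𝒜 h]

lemma prjAux_of_mem_ne {d e : ℕ} {x : S} (h : x ∈ 𝒜 e) (hne : e ≠ d) :
    prjAux 𝒜 d x = 0 := by
  rw [prjAux_apply, DirectSum.decompose_of_mem_ne 𝒜 h hne]

lemma sum_prjAux (x : S) :
    ∑ i ∈ (DirectSum.decompose 𝒜 x).support, prjAux 𝒜 i x = x :=
  DirectSum.sum_support_decompose 𝒜 x

lemma closure_homog {X : Set S} (hX : ∀ x ∈ X, ∃ d, x ∈ 𝒜 d) {x : S}
    (hx : x ∈ Submonoid.closure X) : ∃ d, x ∈ 𝒜 d := by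
  induction hx using Submonoid.closure_induction with
  | mem y hy => exact hX y hy
  | one => exact ⟨0, SetLike.GradedOne.one_mem⟩
  | mul a b _ _ ha hb =>
      obtain ⟨d, hd⟩ := ha
      obtain ⟨e, he⟩ := hb
      exact ⟨d + e, SetLike.GradedMul.mul_mem hd he⟩

/-- Each graded piece of a finitely generated graded algebra with `𝒜 0 = 1`
is a finitely generated `R`-module. -/
lemma pieceAux_fg (h0 : 𝒜 0 = 1) [Algebra.FiniteType R S] (d : ℕ) : (𝒜 d).FG := by
  classical
  obtain ⟨s, hs⟩ := (inferInstance : Algebra.FiniteType R S).out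
  set Xf : Finset S := s.biUnion (fun x =>
    ((DirectSum.decompose 𝒜 x).support.filter (· ≠ 0)).image (fun i => prjAux 𝒜 i x))
    with hXf
  have hXhom : ∀ y ∈ Xf, ∃ e, e ≠ 0 ∧ y ∈ 𝒜 e := by
    intro y hy
    simp only [hXf, Finset.mem_biUnion, Finset.mem_image, Finset.mem_filter] at hy
    obtain ⟨x, -, i, ⟨-, hi0⟩, rfl⟩ := hy
    exact ⟨i, hi0, prjAux_mem 𝒜 i x⟩
  have htop : Algebra.adjoin R (Xf : Set S) = ⊤ := by
    rw [eq_top_iff, ← hs]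
    apply Algebra.adjoin_le
    intro x hx
    have hxe : x = ∑ i ∈ (DirectSum.decompose 𝒜 x).support, prjAux 𝒜 i x :=
      (sum_prjAux 𝒜 x).symm
    rw [hxe]
    apply Subalgebra.sum_mem
    intro i hi
    by_cases hi0 : i = 0
    · subst hi0
      have h1 : prjAux 𝒜 0 x ∈ (1 : Submodule R S) := h0 ▸ prjAux_mem 𝒜 0 x
      obtain ⟨r, hr⟩ := Submodule.mem_one.mp h1
      exact hr ▸ Subalgebra.algebraMap_mem _ r
    · exact Algebra.subset_adjoin (Finset.mem_biUnion.mpr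
        ⟨x, hx, Finset.mem_image.mpr ⟨i, Finset.mem_filter.mpr ⟨hi, hi0⟩, rfl⟩⟩)
  set P : Set S :=
    {z | (∃ l : List S, (∀ y ∈ l, y ∈ Xf) ∧ l.length ≤ d ∧ l.prod = z) ∧ z ∈ 𝒜 d} with hP
  have hPfin : P.Finite := by
    have hXfin : (Xf : Set S).Finite := Xf.finite_toSet
    have := hXfin.to_subtype
    have h1 : {l : List ((Xf : Set S)) | l.length ≤ d}.Finite :=
      List.finite_length_le _ d
    apply Set.Finite.subset (h1.image (fun l => (l.map Subtype.val).prod))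
    rintro z ⟨⟨l, hl, hlen, rfl⟩, -⟩
    refine ⟨l.pmap (fun y hy => (⟨y, hy⟩ : (Xf : Set S))) hl, ?_, ?_⟩
    · simpa using hlen
    · simp [List.map_pmap]
  have key : ∀ x ∈ Submodule.span R ((Submonoid.closure (Xf : Set S) : Set S)),
      prjAux 𝒜 d x ∈ Submodule.span R P := by
    intro x hx
    induction hx using Submodule.span_induction with
    | mem m hm =>
        obtain ⟨l, hl, rfl⟩ := Submonoid.exists_list_of_mem_closure hm
        have hD : ∃ D, l.prod ∈ 𝒜 D ∧ l.length ≤ D := by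
          clear hm
          induction l with
          | nil => exact ⟨0, by simpa using SetLike.GradedOne.one_mem, le_rfl⟩
          | cons y l ih =>
              obtain ⟨D, hDmem, hlen⟩ := ih (fun z hz => hl z (List.mem_cons_of_mem _ hz))
              obtain ⟨e, he0, he⟩ := hXhom y (hl y List.mem_cons_self)
              refine ⟨e + D, by simpa using SetLike.GradedMul.mul_mem he hDmem, ?_⟩
              simp only [List.length_cons]
              omega
        obtain ⟨D, hDmem, hlen⟩ := hD
        by_cases hDd : D = d
        · subst hDd
          rw [prjAux_of_mem_same 𝒜 hDmem]
          exact Submodule.subset_span ⟨⟨l, hl, hlen, rfl⟩, hDmem⟩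
        · rw [prjAux_of_mem_ne 𝒜 hDmem hDd]
          exact zero_mem _
    | zero => rw [map_zero]; exact zero_mem _
    | add a b _ _ ha hb => rw [map_add]; exact add_mem ha hb
    | smul r a _ h => rw [map_smul]; exact Submodule.smul_mem _ _ h
  refine ⟨hPfin.toFinset, ?_⟩
  rw [Set.Finite.coe_toFinset]
  apply le_antisymm
  · rw [Submodule.span_le]
    rintro z ⟨-, hz⟩
    exact hz
  · intro x hx
    have hx' : x ∈ Submodule.span R ((Submonoid.closure (Xf : Set S) : Set S)) := by
      have hxt : x ∈ Subalgebra.toSubmodule (Algebra.adjoin R (Xf : Set S)) := by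
        rw [htop]; exact Submodule.mem_top
      rwa [Algebra.adjoin_eq_span] at hxt
    have hk := key x hx'
    rwa [prjAux_of_mem_same 𝒜 hx] at hk

end Aux

/-- Let `R` be a local ring with residue field `F`, let `S` be a finitely
generated graded `R`-algebra with `S₀ = R`, let `f₁,…,fₙ ∈ S` be homogeneous and let
`A = R[f₁,…,fₙ] ⊆ S`. If `S_F = S ⊗_R F` is a finitely generated module over the
`F`-subalgebra `A_F` generated by the classes of the `fᵢ`, then `S` is a finitely generated
`A`-module. -/
theorem stmt_5 (R S : Type*) [CommRing R] [IsLocalRing R] [CommRing S] [Algebra R S]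
    (𝒜 : ℕ → Submodule R S) [GradedAlgebra 𝒜] (h0 : 𝒜 0 = 1) [Algebra.FiniteType R S]
    {m : ℕ} (f : Fin m → S) (hf : ∀ i, ∃ d, f i ∈ 𝒜 d)
    (hfin : Module.Finite
      (Algebra.adjoin (IsLocalRing.ResidueField R)
        (Set.range fun i => (Algebra.TensorProduct.includeRight
          (R := R) (A := IsLocalRing.ResidueField R) (B := S)) (f i)))
      (IsLocalRing.ResidueField R ⊗[R] S)) :
    Module.Finite (Algebra.adjoin R (Set.range f)) S := by
  classical
  set F := IsLocalRing.ResidueField R with hF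
  set 𝔪 := IsLocalRing.maximalIdeal R with h𝔪
  set AF := Algebra.adjoin F
      (Set.range fun i => (Algebra.TensorProduct.includeRight
        (R := R) (A := F) (B := S)) (f i)) with hAF
  -- finite generating set of F ⊗ S over AF
  obtain ⟨t, ht⟩ := Module.finite_def.mp hfin
  -- finite set of homogeneous elements G of S whose images generate over AF
  set G : Finset S := t.biUnion (fun τ =>
    (TensorProduct.exists_finset τ).choose.biUnion (fun p =>
      (DirectSum.decompose 𝒜 p.2).support.image (fun i => prjAux 𝒜 i p.2))) with hG
  have hGhom : ∀ g ∈ G, ∃ e, g ∈ 𝒜 e := by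
    intro g hg
    simp only [hG, Finset.mem_biUnion, Finset.mem_image] at hg
    obtain ⟨τ, -, p, -, i, -, rfl⟩ := hg
    exact ⟨i, prjAux_mem 𝒜 i p.2⟩
  set Gt : Set (F ⊗[R] S) := (fun g => (1 : F) ⊗ₜ[R] g) '' (G : Set S) with hGt
  have hspan : (⊤ : Submodule AF (F ⊗[R] S)) ≤ Submodule.span AF Gt := by
    rw [← ht, Submodule.span_le]
    intro τ hτ
    have hτe := (TensorProduct.exists_finset τ).choose_spec
    have hτm : τ ∈ Submodule.span AF Gt := by
      rw [hτe]
      apply Submodule.sum_mem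
      intro p hp
      have h1 : p.1 ⊗ₜ[R] p.2 = p.1 • ((1 : F) ⊗ₜ[R] p.2) := by
        rw [TensorProduct.smul_tmul', smul_eq_mul, mul_one]
      rw [h1]
      apply Submodule.smul_of_tower_mem (S := F)
      have h2 : (1 : F) ⊗ₜ[R] p.2
          = ∑ i ∈ (DirectSum.decompose 𝒜 p.2).support, (1 : F) ⊗ₜ[R] prjAux 𝒜 i p.2 := by
        rw [← TensorProduct.tmul_sum, sum_prjAux]
      rw [h2]
      apply Submodule.sum_mem
      intro i hi
      apply Submodule.subset_span
      exact ⟨prjAux 𝒜 i p.2, Finset.mem_biUnion.mpr ⟨τ, hτ, Finset.mem_biUnion.mpr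
        ⟨p, hp, Finset.mem_image.mpr ⟨i, hi, rfl⟩⟩⟩, rfl⟩
    exact hτm
  -- the candidate module: monomials in the `f i` times generators
  set T : Set S := {z | ∃ b ∈ Submonoid.closure (Set.range f), ∃ g ∈ (G : Set S), z = b * g}
    with hT
  set N0 : Submodule R S := Submodule.span R T with hN0
  have hstab : ∀ i, ∀ n ∈ N0, f i * n ∈ N0 := by
    intro i n hn
    induction hn using Submodule.span_induction with
    | mem z hz =>
        obtain ⟨b, hb, g, hg, rfl⟩ := hz
        have he : f i * (b * g) = (f i * b) * g := by ring
        rw [he]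
        exact Submodule.subset_span ⟨f i * b,
          Submonoid.mul_mem _ (Submonoid.subset_closure ⟨i, rfl⟩) hb, g, hg, rfl⟩
    | zero => rw [mul_zero]; exact zero_mem _
    | add a b _ _ ha hb => rw [mul_add]; exact add_mem ha hb
    | smul r a _ h => rw [mul_smul_comm]; exact Submodule.smul_mem _ _ h
  -- multiplication by elements of AF preserves { 1 ⊗ n | n ∈ N0 }
  have hmul : ∀ x ∈ AF, ∀ n ∈ N0, ∃ n' ∈ N0, (1 : F) ⊗ₜ[R] n' = x * ((1 : F) ⊗ₜ[R] n) := by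
    intro x hx
    rw [hAF] at hx
    induction hx using Algebra.adjoin_induction with
    | mem x hx =>
        intro n hn
        obtain ⟨i, rfl⟩ := hx
        refine ⟨f i * n, hstab i n hn, ?_⟩
        simp only [Algebra.TensorProduct.includeRight_apply,
          Algebra.TensorProduct.tmul_mul_tmul, one_mul]
    | algebraMap c =>
        intro n hn
        obtain ⟨r, rfl⟩ := Ideal.Quotient.mk_surjective (I := 𝔪) c
        refine ⟨r • n, Submodule.smul_mem _ _ hn, ?_⟩
        have hr1 : r • (1 : F) = Ideal.Quotient.mk 𝔪 r := by
          rw [← Algebra.algebraMap_eq_smul_one, ← Ideal.Quotient.algebraMap_eq]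
          rfl
        rw [← hr1, Algebra.TensorProduct.algebraMap_apply, Algebra.TensorProduct.tmul_mul_tmul,
          one_mul, mul_one, TensorProduct.tmul_smul, TensorProduct.smul_tmul']
        simp
    | add x y hx hy ihx ihy =>
        intro n hn
        obtain ⟨n1, hn1, h1⟩ := ihx n hn
        obtain ⟨n2, hn2, h2⟩ := ihy n hn
        exact ⟨n1 + n2, add_mem hn1 hn2, by rw [TensorProduct.tmul_add, h1, h2, ← add_mul]⟩
    | mul x y hx hy ihx ihy =>
        intro n hn
        obtain ⟨n2, hn2, h2⟩ := ihy n hn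
        obtain ⟨n1, hn1, h1⟩ := ihx n2 hn2
        exact ⟨n1, hn1, by rw [h1, h2, mul_assoc]⟩
  -- every element of the AF-span of Gt is of the form 1 ⊗ n with n ∈ N0
  have hQ : ∀ z ∈ Submodule.span AF Gt, ∃ n ∈ N0, (1 : F) ⊗ₜ[R] n = z := by
    intro z hz
    induction hz using Submodule.span_induction with
    | mem z hz =>
        obtain ⟨g, hg, rfl⟩ := hz
        exact ⟨g, Submodule.subset_span ⟨1, Submonoid.one_mem _, g, hg, (one_mul g).symm⟩, rfl⟩
    | zero => exact ⟨0, zero_mem _, TensorProduct.tmul_zero _ _⟩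
    | add a b _ _ ha hb =>
        obtain ⟨n, hn, hn'⟩ := ha
        obtain ⟨n', hn2, hn2'⟩ := hb
        exact ⟨n + n', add_mem hn hn2, by rw [TensorProduct.tmul_add, hn', hn2']⟩
    | smul a z _ hz =>
        obtain ⟨n, hn, rfl⟩ := hz
        obtain ⟨n', hn', he⟩ := hmul (a : F ⊗[R] S) a.2 n hn
        exact ⟨n', hn', by rw [he, Subalgebra.smul_def, smul_eq_mul]⟩
  -- hence S = N0 + 𝔪 S
  have h1 : ∀ x : S, ∃ n ∈ N0, x - n ∈ (𝔪 • ⊤ : Submodule R S) := by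
    intro x
    obtain ⟨n, hn, he⟩ := hQ ((1 : F) ⊗ₜ[R] x) (hspan Submodule.mem_top)
    refine ⟨n, hn, ?_⟩
    have h2 : (1 : F) ⊗ₜ[R] (x - n) = 0 := by
      rw [TensorProduct.tmul_sub, he, sub_self]
    have h3 := congrArg (TensorProduct.quotTensorEquivQuotSMul S 𝔪) h2
    replace h3 := h3.trans (map_zero _)
    have h4 : (1 : F) = Ideal.Quotient.mk 𝔪 1 := rfl
    replace h3 := (TensorProduct.quotTensorEquivQuotSMul_mk_tmul (I := 𝔪) (1 : R) (x - n)).symm.trans h3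
    rw [one_smul] at h3
    rwa [← Submodule.Quotient.mk_eq_zero]
  -- N0 is stable under projections
  have hN0proj : ∀ d : ℕ, ∀ n ∈ N0, prjAux 𝒜 d n ∈ N0 := by
    intro d n hn
    induction hn using Submodule.span_induction with
    | mem z hz =>
        obtain ⟨b, hb, g, hg, rfl⟩ := hz
        obtain ⟨db, hdb⟩ := closure_homog 𝒜 (fun x hx => by
          obtain ⟨i, rfl⟩ := hx; exact hf i) hb
        obtain ⟨dg, hdg⟩ := hGhom g hg
        have hbg : b * g ∈ 𝒜 (db + dg) := SetLike.GradedMul.mul_mem hdb hdg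
        by_cases hd : db + dg = d
        · rw [hd] at hbg
          rw [prjAux_of_mem_same 𝒜 hbg]
          exact Submodule.subset_span ⟨b, hb, g, hg, rfl⟩
        · rw [prjAux_of_mem_ne 𝒜 hbg hd]
          exact zero_mem _
    | zero => rw [map_zero]; exact zero_mem _
    | add a b _ _ ha hb => rw [map_add]; exact add_mem ha hb
    | smul r a _ h => rw [map_smul]; exact Submodule.smul_mem _ _ h
  -- degreewise: 𝒜 d ≤ N0 ⊔ 𝔪 • 𝒜 d
  have h2 : ∀ d : ℕ, 𝒜 d ≤ N0 ⊔ 𝔪 • 𝒜 d := by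
    intro d x hx
    obtain ⟨n, hn, hw⟩ := h1 x
    have hxeq : x = prjAux 𝒜 d n + prjAux 𝒜 d (x - n) := by
      rw [← map_add, add_sub_cancel, prjAux_of_mem_same 𝒜 hx]
    rw [hxeq]
    apply Submodule.add_mem_sup (hN0proj d n hn)
    refine Submodule.smul_induction_on hw ?_ ?_
    · intro r hr y _
      rw [map_smul]
      exact Submodule.smul_mem_smul hr (prjAux_mem 𝒜 d y)
    · intro y z hy hz
      rw [map_add]
      exact add_mem hy hz
  -- Nakayama, degree by degree
  have hjac : 𝔪 ≤ Ideal.jacobson ⊥ :=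
    (IsLocalRing.jacobson_eq_maximalIdeal (⊥ : Ideal R) bot_ne_top).ge
  have h3 : ∀ d : ℕ, 𝒜 d ≤ N0 := fun d =>
    Submodule.le_of_le_smul_of_le_jacobson_bot (pieceAux_fg 𝒜 h0 d) hjac (h2 d)
  have h4 : N0 = ⊤ := by
    rw [eq_top_iff]
    intro x _
    rw [← sum_prjAux 𝒜 x]
    exact Submodule.sum_mem _ (fun i _ => h3 i (prjAux_mem 𝒜 i x))
  -- conclude
  have hAspan : Submodule.span (Algebra.adjoin R (Set.range f)) (G : Set S) = ⊤ := by
    rw [eq_top_iff]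
    intro x _
    have hx : x ∈ N0 := h4 ▸ Submodule.mem_top
    have hle : N0 ≤ (Submodule.span (Algebra.adjoin R (Set.range f)) (G : Set S)).restrictScalars R := by
      rw [hN0, Submodule.span_le]
      rintro z ⟨b, hb, g, hg, rfl⟩
      have hbA : b ∈ Algebra.adjoin R (Set.range f) := by
        have hle' : Submonoid.closure (Set.range f) ≤
            (Algebra.adjoin R (Set.range f)).toSubmonoid :=
          Submonoid.closure_le.mpr (fun y hy => Algebra.subset_adjoin hy)
        exact hle' hb
      have : b * g = (⟨b, hbA⟩ : Algebra.adjoin R (Set.range f)) • g := rfl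
      rw [this]
      exact Submodule.smul_mem _ _ (Submodule.subset_span hg)
    exact hle hx
  exact ⟨⟨G, hAspan⟩⟩
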